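/- Let T be a semistandard n-tableau of shape P/Q and let g(T) be the associated GT n-parallelogram, given by g(T)_{i,j} := Q_{i+1−j} + #{c : (i+1−j, c) is a cell of P/Q and T(i+1−j, c) ≤ i}. Let w be the reverse reading word of T: the list of entries obtained by traversing the rows r = 1, 2, …, m in order and, within each row, traversing the cells from the rightmost column to the leftmost column. Then the following are equivalent: (a) for every initial segment of w and every i ∈ {1,…,n−1}, the initial segment contains at least as many entries equal to i as entries equal to i+1; (b) d(g(T); k, p) ≥ 0 for every k ∈ {1,…,n−1} and every p ∈ {0,…,m−1}. -/

import Mathlib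

open Finset
open scoped Classical

def ShapeHyps (m n : ℕ) (P Q : ℕ → ℤ) : Prop :=
  2 ≤ n ∧ n ≤ m ∧
  (∀ r, 1 ≤ r → r < m → P (r + 1) ≤ P r) ∧ 0 ≤ P m ∧
  (∀ r, 1 ≤ r → r < m → Q (r + 1) ≤ Q r) ∧ 0 ≤ Q m ∧
  (∀ r, 1 ≤ r → r ≤ m → Q r ≤ P r) ∧
  (∀ c : ℤ, ((Finset.Icc 1 m).filter (fun r => Q r < c ∧ c ≤ P r)).card ≤ n)

/-- The finite set of cells of the skew shape `P/Q`: pairs `(r,c)` with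
`1 ≤ r ≤ m` and `Q_r < c ≤ P_r`. -/
noncomputable def cells (m : ℕ) (P Q : ℕ → ℤ) : Finset (ℕ × ℤ) :=
  (Finset.Icc 1 m ×ˢ Finset.Icc 1 (P 1)).filter fun x => Q x.1 < x.2 ∧ x.2 ≤ P x.1

/-- A semistandard `n`-tableau of skew shape `P/Q`: entries in `{1,…,n}`, rows
weakly increasing, columns strictly increasing; values outside the cells of the
shape are normalized to `0`. -/
def IsSSYT (m n : ℕ) (P Q : ℕ → ℤ) (T : ℕ × ℤ → ℕ) : Prop :=
  (∀ x ∈ cells m P Q, 1 ≤ T x ∧ T x ≤ n) ∧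
  (∀ (r : ℕ) (c : ℤ), (r, c) ∈ cells m P Q → (r, c + 1) ∈ cells m P Q →
    T (r, c) ≤ T (r, c + 1)) ∧
  (∀ (r : ℕ) (c : ℤ), (r, c) ∈ cells m P Q → (r + 1, c) ∈ cells m P Q →
    T (r, c) < T (r + 1, c)) ∧
  (∀ x, x ∉ cells m P Q → T x = 0)

/-- `#_i(T)`: the number of cells of `T` with entry `i`. -/
noncomputable def entryCount (m : ℕ) (P Q : ℕ → ℤ) (T : ℕ × ℤ → ℕ) (i : ℕ) : ℕ :=
  ((cells m P Q).filter fun x => T x = i).card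

/-- The skew Schur polynomial `s_{P/Q}(x_1,…,x_n)`, with the variable `x_{i+1}`
encoded as `MvPolynomial.X (i : Fin n)`. -/
noncomputable def skewSchur (m n : ℕ) (P Q : ℕ → ℤ) : MvPolynomial (Fin n) ℤ :=
  ∑ᶠ T ∈ {T : ℕ × ℤ → ℕ | IsSSYT m n P Q T},
    ∏ i : Fin n, MvPolynomial.X i ^ entryCount m P Q T ((i : ℕ) + 1)

/-- The GT `n`-parallelogram associated to a tableau `T` (slot coordinates). -/
noncomputable def gOf (m n : ℕ) (P Q : ℕ → ℤ) (T : ℕ × ℤ → ℕ) : ℕ → ℕ → ℤ := fun i κ =>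
  if i ≤ n ∧ κ < m then
    Q (κ + 1) + ((cells m P Q).filter fun x => x.1 = κ + 1 ∧ T x ≤ i).card
  else 0

/-- The statistic `d(z;k,p)` (here `z k q` is the entry `g_{k,k-q}`). -/
def dstat (z : ℕ → ℕ → ℤ) (k p : ℕ) : ℤ :=
  (∑ q ∈ Finset.range p, (2 * z k q - z (k - 1) q - z (k + 1) q)) + z k p - z (k + 1) p


/-! ### Auxiliary lemmas -/

/-- Count of cells in row `r` with entry `j`. -/
noncomputable def Nrow (m : ℕ) (P Q : ℕ → ℤ) (T : ℕ × ℤ → ℕ) (r j : ℕ) : ℕ :=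
  ((cells m P Q).filter fun x => x.1 = r ∧ T x = j).card

/-- Count of cells in row `r` with entry `≤ j`. -/
noncomputable def Nle (m : ℕ) (P Q : ℕ → ℤ) (T : ℕ × ℤ → ℕ) (r j : ℕ) : ℕ :=
  ((cells m P Q).filter fun x => x.1 = r ∧ T x ≤ j).card

lemma card_filter_or {α} (s : Finset α) (p q : α → Prop)
    [DecidablePred p] [DecidablePred q] [DecidablePred fun x => p x ∨ q x]
    (hd : ∀ x ∈ s, ¬(p x ∧ q x)) :
    (s.filter fun x => p x ∨ q x).card = (s.filter p).card + (s.filter q).card := by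
  have hu : (s.filter fun x => p x ∨ q x) = s.filter p ∪ s.filter q := by
    ext a
    simp only [Finset.mem_filter, Finset.mem_union]
    tauto
  rw [hu]
  apply Finset.card_union_of_disjoint
  rw [Finset.disjoint_left]
  intro a ha hb
  rw [Finset.mem_filter] at ha hb
  exact hd a ha.1 ⟨ha.2, hb.2⟩

lemma mem_cells_bounds (m : ℕ) (P Q : ℕ → ℤ) {x : ℕ × ℤ} (hx : x ∈ cells m P Q) :
    1 ≤ x.1 ∧ x.1 ≤ m ∧ Q x.1 < x.2 ∧ x.2 ≤ P x.1 := by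
  simp only [cells, Finset.mem_filter, Finset.mem_product, Finset.mem_Icc] at hx
  tauto

lemma P_anti (m n : ℕ) (P Q : ℕ → ℤ) (h : ShapeHyps m n P Q) :
    ∀ r' r, 1 ≤ r → r ≤ r' → r' ≤ m → P r' ≤ P r := by
  intro r'
  induction r' with
  | zero => intro r h1 h2 _; omega
  | succ s ih =>
    intro r h1 h2 h3
    rcases eq_or_lt_of_le h2 with heq | hlt
    · rw [heq]
    · have h4 : r ≤ s := by omega
      have h5 : P (s + 1) ≤ P s := h.2.2.1 s (by omega) (by omega)
      exact le_trans h5 (ih r h1 h4 (by omega))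

lemma Q_anti (m n : ℕ) (P Q : ℕ → ℤ) (h : ShapeHyps m n P Q) :
    ∀ r' r, 1 ≤ r → r ≤ r' → r' ≤ m → Q r' ≤ Q r := by
  intro r'
  induction r' with
  | zero => intro r h1 h2 _; omega
  | succ s ih =>
    intro r h1 h2 h3
    rcases eq_or_lt_of_le h2 with heq | hlt
    · rw [heq]
    · have h4 : r ≤ s := by omega
      have h5 : Q (s + 1) ≤ Q s := h.2.2.2.2.1 s (by omega) (by omega)
      exact le_trans h5 (ih r h1 h4 (by omega))

lemma mem_cells_of (m n : ℕ) (P Q : ℕ → ℤ) (h : ShapeHyps m n P Q) {r : ℕ} {c : ℤ}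
    (h1 : 1 ≤ r) (h2 : r ≤ m) (h3 : Q r < c) (h4 : c ≤ P r) :
    (r, c) ∈ cells m P Q := by
  have hQ0 : (0 : ℤ) ≤ Q r := le_trans h.2.2.2.2.2.1 (Q_anti m n P Q h m r h1 h2 le_rfl)
  have hP1 : P r ≤ P 1 := P_anti m n P Q h r 1 le_rfl h1 h2
  simp only [cells, Finset.mem_filter, Finset.mem_product, Finset.mem_Icc]
  exact ⟨⟨⟨h1, h2⟩, by omega, by omega⟩, h3, h4⟩

lemma row_mono (m n : ℕ) (P Q : ℕ → ℤ) (T : ℕ × ℤ → ℕ)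
    (h : ShapeHyps m n P Q) (hT : IsSSYT m n P Q T)
    (r : ℕ) (c c' : ℤ) (hc : (r, c) ∈ cells m P Q) (hc' : (r, c') ∈ cells m P Q)
    (hle : c ≤ c') : T (r, c) ≤ T (r, c') := by
  obtain ⟨d, rfl⟩ : ∃ d : ℕ, c' = c + d := ⟨(c' - c).toNat, by omega⟩
  clear hle
  induction d with
  | zero => simp
  | succ e ih =>
    have hb := mem_cells_bounds m P Q hc
    have hb' := mem_cells_bounds m P Q hc'
    simp only at hb hb'
    have hce : (r, c + (e : ℤ)) ∈ cells m P Q := by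
      apply mem_cells_of m n P Q h hb.1 hb.2.1
      · omega
      · have : ((e : ℤ) : ℤ) ≤ ((e + 1 : ℕ) : ℤ) := by push_cast; omega
        have h2 := hb'.2.2.2
        push_cast at h2 ⊢
        omega
    have h1 := ih hce
    have h2 : T (r, c + (e : ℤ)) ≤ T (r, c + (e : ℤ) + 1) := by
      apply hT.2.1 r (c + (e : ℤ)) hce
      have : c + ((e + 1 : ℕ) : ℤ) = c + (e : ℤ) + 1 := by push_cast; ring
      rw [← this]
      exact hc'
    have h3 : c + ((e + 1 : ℕ) : ℤ) = c + (e : ℤ) + 1 := by push_cast; ring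
    rw [h3]
    exact le_trans h1 h2

lemma Nle_succ (m : ℕ) (P Q : ℕ → ℤ) (T : ℕ × ℤ → ℕ) (r j : ℕ) :
    Nle m P Q T r (j + 1) = Nle m P Q T r j + Nrow m P Q T r (j + 1) := by
  have h1 : ((cells m P Q).filter fun x => x.1 = r ∧ T x ≤ j + 1)
      = (cells m P Q).filter fun x => (x.1 = r ∧ T x ≤ j) ∨ (x.1 = r ∧ T x = j + 1) :=
    Finset.filter_congr fun x _ => by omega
  rw [Nle, Nle, Nrow, h1]
  exact card_filter_or (cells m P Q) (fun x => x.1 = r ∧ T x ≤ j)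
    (fun x => x.1 = r ∧ T x = j + 1) fun x _ hx => by omega

lemma card_lt_row (m : ℕ) (P Q : ℕ → ℤ) (T : ℕ × ℤ → ℕ) (j : ℕ) :
    ∀ r : ℕ, ((cells m P Q).filter fun x => x.1 < r + 1 ∧ T x = j).card
      = ∑ q ∈ Finset.range r, Nrow m P Q T (q + 1) j := by
  intro r
  induction r with
  | zero =>
    rw [Finset.range_zero, Finset.sum_empty, Finset.card_eq_zero,
      Finset.filter_eq_empty_iff]
    intro x hx
    have hb := mem_cells_bounds m P Q hx
    rintro ⟨h1, _⟩
    omega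
  | succ r ih =>
    have h1 : ((cells m P Q).filter fun x => x.1 < r + 1 + 1 ∧ T x = j)
        = (cells m P Q).filter fun x => (x.1 < r + 1 ∧ T x = j) ∨ (x.1 = r + 1 ∧ T x = j) :=
      Finset.filter_congr fun x _ => by
        rw [Nat.lt_succ_iff_lt_or_eq]
        tauto
    rw [h1, Finset.sum_range_succ, ← ih]
    exact card_filter_or (cells m P Q) (fun x => x.1 < r + 1 ∧ T x = j)
      (fun x => x.1 = r + 1 ∧ T x = j) fun x _ hx => by omega

lemma prefix_card (m : ℕ) (P Q : ℕ → ℤ) (T : ℕ × ℤ → ℕ) (p : ℕ) (c₀ : ℤ) (j : ℕ) :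
    ((cells m P Q).filter fun x => (x.1 < p + 1 ∨ (x.1 = p + 1 ∧ c₀ ≤ x.2)) ∧ T x = j).card
      = (∑ q ∈ Finset.range p, Nrow m P Q T (q + 1) j)
        + ((cells m P Q).filter fun x => x.1 = p + 1 ∧ c₀ ≤ x.2 ∧ T x = j).card := by
  have h1 : ((cells m P Q).filter fun x => (x.1 < p + 1 ∨ (x.1 = p + 1 ∧ c₀ ≤ x.2)) ∧ T x = j)
      = (cells m P Q).filter fun x =>
          (x.1 < p + 1 ∧ T x = j) ∨ (x.1 = p + 1 ∧ c₀ ≤ x.2 ∧ T x = j) :=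
    Finset.filter_congr fun x _ => by tauto
  have h2 := card_filter_or (cells m P Q) (fun x => x.1 < p + 1 ∧ T x = j)
    (fun x => x.1 = p + 1 ∧ c₀ ≤ x.2 ∧ T x = j) fun x _ hx => by omega
  rw [h1]
  refine h2.trans ?_
  rw [card_lt_row]

lemma dstat_eq (m n : ℕ) (P Q : ℕ → ℤ) (T : ℕ × ℤ → ℕ)
    (k p : ℕ) (hk1 : 1 ≤ k) (hk2 : k < n) (hp : p < m) :
    dstat (gOf m n P Q T) k p
      = (∑ q ∈ Finset.range p,
          ((Nrow m P Q T (q + 1) k : ℤ) - (Nrow m P Q T (q + 1) (k + 1) : ℤ)))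
        - (Nrow m P Q T (p + 1) (k + 1) : ℤ) := by
  have hterm : ∀ q, q < m →
      2 * gOf m n P Q T k q - gOf m n P Q T (k - 1) q - gOf m n P Q T (k + 1) q
        = (Nrow m P Q T (q + 1) k : ℤ) - (Nrow m P Q T (q + 1) (k + 1) : ℤ) := by
    intro q hq
    have c1 : k ≤ n ∧ q < m := ⟨le_of_lt hk2, hq⟩
    have c2 : k - 1 ≤ n ∧ q < m := ⟨by omega, hq⟩
    have c3 : k + 1 ≤ n ∧ q < m := ⟨by omega, hq⟩
    simp only [gOf]
    rw [if_pos c1, if_pos c2, if_pos c3]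
    have hA := Nle_succ m P Q T (q + 1) (k - 1)
    rw [show k - 1 + 1 = k from by omega] at hA
    have hB := Nle_succ m P Q T (q + 1) k
    simp only [Nle, Nrow] at hA hB ⊢
    omega
  have htail :
      gOf m n P Q T k p - gOf m n P Q T (k + 1) p = -(Nrow m P Q T (p + 1) (k + 1) : ℤ) := by
    have c1 : k ≤ n ∧ p < m := ⟨le_of_lt hk2, hp⟩
    have c3 : k + 1 ≤ n ∧ p < m := ⟨by omega, hp⟩
    simp only [gOf]
    rw [if_pos c1, if_pos c3]
    have hB := Nle_succ m P Q T (p + 1) k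
    simp only [Nle, Nrow] at hB ⊢
    omega
  have hsum : (∑ q ∈ Finset.range p,
      (2 * gOf m n P Q T k q - gOf m n P Q T (k - 1) q - gOf m n P Q T (k + 1) q))
      = ∑ q ∈ Finset.range p,
          ((Nrow m P Q T (q + 1) k : ℤ) - (Nrow m P Q T (q + 1) (k + 1) : ℤ)) :=
    Finset.sum_congr rfl fun q hq => hterm q (by
      have := Finset.mem_range.mp hq; omega)
  simp only [dstat]
  rw [hsum]
  have := htail
  omega
  

/-- A semistandard `n`-tableau `T` of shape `P/Q` satisfies
the ballot (lattice-word) condition on every initial segment of its reverse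
reading word (rows top to bottom, cells right to left; an initial segment is
cut off at a row `r₀` and column threshold `c₀`) if and only if
`d(g(T);k,p) ≥ 0` for every `k ∈ {1,…,n−1}` and `p ∈ {0,…,m−1}`. -/
theorem ballot_iff_dstat_nonneg
    (m n : ℕ) (P Q : ℕ → ℤ) (h : ShapeHyps m n P Q)
    (T : ℕ × ℤ → ℕ) (hT : IsSSYT m n P Q T) :
    (∀ (r₀ : ℕ) (c₀ : ℤ) (i : ℕ), 1 ≤ i → i < n →
      ((cells m P Q).filter
          (fun x => (x.1 < r₀ ∨ (x.1 = r₀ ∧ c₀ ≤ x.2)) ∧ T x = i + 1)).card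
        ≤ ((cells m P Q).filter
          (fun x => (x.1 < r₀ ∨ (x.1 = r₀ ∧ c₀ ≤ x.2)) ∧ T x = i)).card)
    ↔ (∀ k, 1 ≤ k → k < n → ∀ p < m, 0 ≤ dstat (gOf m n P Q T) k p) := by
  constructor
  · intro hb k hk1 hk2 p hp
    rw [dstat_eq m n P Q T k p hk1 hk2 hp, Finset.sum_sub_distrib,
      ← Nat.cast_sum, ← Nat.cast_sum]
    suffices hkey : (∑ q ∈ Finset.range p, Nrow m P Q T (q + 1) (k + 1))
        + Nrow m P Q T (p + 1) (k + 1)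
        ≤ ∑ q ∈ Finset.range p, Nrow m P Q T (q + 1) k by omega
    by_cases hne : ((cells m P Q).filter fun x => x.1 = p + 1 ∧ T x = k + 1).Nonempty
    · obtain ⟨y, hy⟩ := hne
      have hCne : (((cells m P Q).filter fun x => x.1 = p + 1 ∧ T x = k + 1).image
          Prod.snd).Nonempty := ⟨y.2, Finset.mem_image_of_mem _ hy⟩
      set C := ((cells m P Q).filter fun x => x.1 = p + 1 ∧ T x = k + 1).image Prod.snd
        with hC
      set c₀ := C.min' hCne with hc₀
      have hball := hb (p + 1) c₀ k hk1 hk2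
      rw [prefix_card, prefix_card] at hball
      have htail1 : ((cells m P Q).filter fun x => x.1 = p + 1 ∧ c₀ ≤ x.2 ∧ T x = k + 1).card
          = Nrow m P Q T (p + 1) (k + 1) := by
        rw [Nrow]
        congr 1
        apply Finset.filter_congr
        intro x hx
        constructor
        · rintro ⟨h1, _, h3⟩; exact ⟨h1, h3⟩
        · rintro ⟨h1, h2⟩
          refine ⟨h1, ?_, h2⟩
          exact C.min'_le x.2 (Finset.mem_image_of_mem _ (Finset.mem_filter.mpr ⟨hx, h1, h2⟩))
      have htail2 : ((cells m P Q).filter fun x => x.1 = p + 1 ∧ c₀ ≤ x.2 ∧ T x = k).card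
          = 0 := by
        rw [Finset.card_eq_zero, Finset.filter_eq_empty_iff]
        intro x hx
        rintro ⟨h1, h2, h3⟩
        have hcmem : c₀ ∈ C := C.min'_mem hCne
        rw [hC] at hcmem
        obtain ⟨z, hz, hz2⟩ := Finset.mem_image.mp hcmem
        rw [Finset.mem_filter] at hz
        have hzc : z = (p + 1, c₀) := Prod.ext hz.2.1 hz2
        have hxc : x = (p + 1, x.2) := Prod.ext h1 rfl
        have hmono := row_mono m n P Q T h hT (p + 1) c₀ x.2 (hzc ▸ hz.1) (hxc ▸ hx) h2
        rw [← hzc, ← hxc] at hmono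
        have := hz.2.2
        omega
      rw [htail1, htail2] at hball
      omega
    · have hS0 : Nrow m P Q T (p + 1) (k + 1) = 0 := by
        rw [Nrow, Finset.card_eq_zero]
        rw [Finset.not_nonempty_iff_eq_empty] at hne
        exact hne
      have hball := hb (p + 1) (P (p + 1) + 1) k hk1 hk2
      rw [prefix_card, prefix_card] at hball
      have ht : ∀ j, ((cells m P Q).filter
          fun x => x.1 = p + 1 ∧ P (p + 1) + 1 ≤ x.2 ∧ T x = j).card = 0 := by
        intro j
        rw [Finset.card_eq_zero, Finset.filter_eq_empty_iff]
        intro x hx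
        rintro ⟨h1, h2, _⟩
        have hbx := mem_cells_bounds m P Q hx
        rw [h1] at hbx
        omega
      rw [ht, ht] at hball
      omega
  · intro hd r₀ c₀ i hi1 hi2
    rcases Nat.lt_or_ge r₀ 1 with hr0 | hr1
    · have hemp : ((cells m P Q).filter
          fun x => (x.1 < r₀ ∨ (x.1 = r₀ ∧ c₀ ≤ x.2)) ∧ T x = i + 1) = ∅ := by
        rw [Finset.filter_eq_empty_iff]
        intro x hx
        have hbx := mem_cells_bounds m P Q hx
        rintro ⟨h1 | ⟨h1, _⟩, _⟩ <;> omega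
      simp [hemp]
    rcases le_or_gt r₀ m with hrm | hrm
    · obtain ⟨p, rfl⟩ : ∃ p, r₀ = p + 1 := ⟨r₀ - 1, by omega⟩
      have hd' := hd i hi1 hi2 p (by omega)
      rw [dstat_eq m n P Q T i p hi1 hi2 (by omega), Finset.sum_sub_distrib,
        ← Nat.cast_sum, ← Nat.cast_sum] at hd'
      rw [prefix_card, prefix_card]
      have htail : ((cells m P Q).filter fun x => x.1 = p + 1 ∧ c₀ ≤ x.2 ∧ T x = i + 1).card
          ≤ Nrow m P Q T (p + 1) (i + 1) := by
        rw [Nrow]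
        apply Finset.card_le_card
        intro x hx
        simp only [Finset.mem_filter] at hx ⊢
        tauto
      omega
    · have hm1 : 1 ≤ m := le_trans (le_trans one_le_two h.1) h.2.1
      obtain ⟨p, rfl⟩ : ∃ p, m = p + 1 := ⟨m - 1, by omega⟩
      have hd' := hd i hi1 hi2 p (by omega)
      rw [dstat_eq (p + 1) n P Q T i p hi1 hi2 (by omega), Finset.sum_sub_distrib,
        ← Nat.cast_sum, ← Nat.cast_sum] at hd'
      have hcongr : ∀ j, ((cells (p + 1) P Q).filter
          fun x => (x.1 < r₀ ∨ (x.1 = r₀ ∧ c₀ ≤ x.2)) ∧ T x = j).card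
          = ∑ q ∈ Finset.range (p + 1), Nrow (p + 1) P Q T (q + 1) j := by
        intro j
        have h1 : ((cells (p + 1) P Q).filter
            fun x => (x.1 < r₀ ∨ (x.1 = r₀ ∧ c₀ ≤ x.2)) ∧ T x = j)
            = (cells (p + 1) P Q).filter fun x => x.1 < (p + 1) + 1 ∧ T x = j :=
          Finset.filter_congr fun x hx => by
            have hbx := mem_cells_bounds (p + 1) P Q hx
            constructor
            · rintro ⟨_, h2⟩; exact ⟨by omega, h2⟩
            · rintro ⟨_, h2⟩; exact ⟨Or.inl (by omega), h2⟩
        rw [h1, card_lt_row]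
      rw [hcongr, hcongr, Finset.sum_range_succ, Finset.sum_range_succ]
      omega
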